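/- Let M be a compact metric space, (f_t)_{t∈[0,1]} a continuous family of continuous maps with f₀ uniquely ergodic with invariant measure δ₀, and (θ_ε)_{ε>0} a family of probability measures on [0,1] with θ_ε → δ₀ weakly* as ε → 0. If μ^ε is a θ_ε-stationary measure for each ε, then every weak* accumulation point of (μ^ε)_{ε>0} as ε → 0 equals δ₀. -/

import Mathlib

open MeasureTheory Filter Set

/-- Stochastic stability for uniquely ergodic limits: if `f₀ = f 0` is
uniquely ergodic with invariant measure `δ_p`, the noise distributions
`θ ε` (probability measures on the parameter interval `[0,1]`) converge
weakly* to `δ₀`, and `μ ε` is `θ ε`-stationary for every `ε > 0`, then every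
weak* accumulation point of `(μ ε)` as `ε → 0` equals `δ_p`. -/
theorem stmt11 {M : Type*} [MetricSpace M] [CompactSpace M]
    [MeasurableSpace M] [BorelSpace M]
    (f : ℝ → M → M) (hcont : Continuous fun q : ℝ × M => f q.1 q.2)
    (p : M) (hp : f 0 p = p)
    (huniq : ∀ ν : Measure M, IsProbabilityMeasure ν →
      Measure.map (f 0) ν = ν → ν = Measure.dirac p)
    (θ : ℝ → Measure ℝ) (hθprob : ∀ ε ∈ Set.Ioi (0 : ℝ), IsProbabilityMeasure (θ ε))
    (hθsupp : ∀ ε ∈ Set.Ioi (0 : ℝ), θ ε (Set.Icc (0 : ℝ) 1)ᶜ = 0)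
    (hθconv : ∀ ψ : C(ℝ, ℝ),
      Tendsto (fun ε => ∫ t, ψ t ∂(θ ε)) (nhdsWithin 0 (Set.Ioi (0 : ℝ)))
        (nhds (ψ 0)))
    (μ : ℝ → ProbabilityMeasure M)
    (hstat : ∀ ε ∈ Set.Ioi (0 : ℝ), ∀ φ : C(M, ℝ),
      ∫ x, φ x ∂(μ ε : Measure M)
        = ∫ t, ∫ x, φ (f t x) ∂(μ ε : Measure M) ∂(θ ε)) :
    ∀ ν : ProbabilityMeasure M,
      MapClusterPt ν (nhdsWithin 0 (Set.Ioi (0 : ℝ))) μ →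
      (ν : Measure M) = Measure.dirac p := by
  intro ν hν
  obtain ⟨U, hUle, hUtend⟩ := mapClusterPt_iff_ultrafilter.mp hν
  have hf0 : Continuous (f 0) := hcont.comp (continuous_const.prodMk continuous_id)
  -- Key step: ν is invariant under f 0 at the level of integrals of continuous functions.
  have key : ∀ φ : C(M, ℝ),
      ∫ x, φ x ∂(ν : Measure M) = ∫ x, φ (f 0 x) ∂(ν : Measure M) := by
    intro φ
    set G : C(ℝ × M, M) := ⟨fun q => f q.1 q.2, hcont⟩ with hG
    set F : C(ℝ, C(M, ℝ)) := (φ.comp G).curry with hF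
    have hFt : ∀ t x, F t x = φ (f t x) := fun t x => rfl
    set ψ : C(ℝ, ℝ) := ⟨fun t => ‖F t - F 0‖,
      (F.continuous.sub continuous_const).norm⟩ with hψ
    have hψ0 : ψ 0 = 0 := by simp [hψ]
    have hψconv := hθconv ψ
    rw [hψ0] at hψconv
    -- uniform bound on the error for each ε > 0
    have hbound : ∀ ε ∈ Set.Ioi (0 : ℝ),
        ‖(∫ x, φ x ∂(μ ε : Measure M)) - ∫ x, φ (f 0 x) ∂(μ ε : Measure M)‖
          ≤ ∫ t, ψ t ∂(θ ε) := by
      intro ε hε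
      haveI := hθprob ε hε
      set m : Measure M := (μ ε : Measure M) with hm
      have hcM : ∀ t : ℝ, Continuous fun x => φ (f t x) := fun t =>
        φ.continuous.comp (hcont.comp (continuous_const.prodMk continuous_id))
      set h : ℝ → ℝ := fun t => ∫ x, φ (f t x) ∂m with hh
      have hhb : ∀ t, ‖h t‖ ≤ ‖φ‖ := by
        intro t
        have := norm_integral_le_of_norm_le (μ := m) (integrable_const ‖φ‖)
          (ae_of_all _ fun x => φ.norm_coe_le_norm (f t x))
        simpa using this
      have hconth : Continuous h := by
        apply continuous_of_dominated (bound := fun _ => ‖φ‖)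
          (fun t => (hcM t).aestronglyMeasurable)
          (fun t => ae_of_all _ fun x => φ.norm_coe_le_norm (f t x))
          (integrable_const _)
        exact ae_of_all _ fun x =>
          φ.continuous.comp (hcont.comp (continuous_id.prodMk continuous_const))
      have hInth : Integrable h (θ ε) :=
        (integrable_const ‖φ‖).mono' hconth.aestronglyMeasurable (ae_of_all _ hhb)
      -- pointwise bound ‖h t - h 0‖ ≤ ψ t
      have hpt : ∀ t, ‖h t - h 0‖ ≤ ψ t := by
        intro t
        have hI : ∀ s : ℝ, Integrable (fun x => φ (f s x)) m := fun s =>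
          (integrable_const ‖φ‖).mono' (hcM s).aestronglyMeasurable
            (ae_of_all _ fun x => φ.norm_coe_le_norm (f s x))
        have hsub : h t - h 0 = ∫ x, (φ (f t x) - φ (f 0 x)) ∂m :=
          (integral_sub (hI t) (hI 0)).symm
        rw [hsub]
        have hb2 : ∀ x, ‖φ (f t x) - φ (f 0 x)‖ ≤ ψ t := by
          intro x
          calc ‖φ (f t x) - φ (f 0 x)‖ = ‖(F t - F 0) x‖ := by
                simp [hFt, ContinuousMap.sub_apply]
            _ ≤ ‖F t - F 0‖ := (F t - F 0).norm_coe_le_norm x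
            _ = ψ t := rfl
        have := norm_integral_le_of_norm_le (μ := m) (integrable_const (ψ t))
          (ae_of_all _ hb2)
        simpa using this
      -- ψ is integrable w.r.t. θ ε (bounded on the support [0,1])
      have hψInt : Integrable ψ (θ ε) := by
        obtain ⟨C, hC⟩ := (isCompact_Icc (a := (0:ℝ)) (b := 1)).exists_bound_of_continuousOn
          ψ.continuous.continuousOn
        refine (integrable_const C).mono' ψ.continuous.aestronglyMeasurable ?_
        refine MeasureTheory.ae_iff.mpr (measure_mono_null ?_ (hθsupp ε hε))
        exact fun t ht hmem => ht (hC t hmem)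
      -- rewrite using stationarity
      have hstat' : ∫ x, φ x ∂m = ∫ t, h t ∂(θ ε) := hstat ε hε φ
      have hconst : ∫ x, φ (f 0 x) ∂m = ∫ t, h 0 ∂(θ ε) := by
        simp [integral_const]
        rfl
      rw [hstat', hconst, ← integral_sub hInth (integrable_const _)]
      exact norm_integral_le_of_norm_le hψInt (ae_of_all _ hpt)
    -- squeeze: the error tends to 0 along 𝓝[>] 0
    have hD0 : Tendsto
        (fun ε => (∫ x, φ x ∂(μ ε : Measure M)) - ∫ x, φ (f 0 x) ∂(μ ε : Measure M))
        (nhdsWithin 0 (Set.Ioi (0 : ℝ))) (nhds 0) := by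
      apply squeeze_zero_norm' _ hψconv
      filter_upwards [self_mem_nhdsWithin] with ε hε using hbound ε hε
    -- pass to the limit along the ultrafilter U
    have h1 : Tendsto (fun ε => ∫ x, (BoundedContinuousFunction.mkOfCompact φ) x
        ∂(μ ε : Measure M)) U (nhds (∫ x, (BoundedContinuousFunction.mkOfCompact φ) x
        ∂(ν : Measure M))) :=
      ProbabilityMeasure.tendsto_iff_forall_integral_tendsto.mp hUtend _
    have h2 : Tendsto (fun ε => ∫ x, (BoundedContinuousFunction.mkOfCompact
        (φ.comp ⟨f 0, hf0⟩)) x ∂(μ ε : Measure M)) U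
        (nhds (∫ x, (BoundedContinuousFunction.mkOfCompact (φ.comp ⟨f 0, hf0⟩)) x
        ∂(ν : Measure M))) :=
      ProbabilityMeasure.tendsto_iff_forall_integral_tendsto.mp hUtend _
    simp only [BoundedContinuousFunction.mkOfCompact_apply, ContinuousMap.comp_apply,
      ContinuousMap.coe_mk] at h1 h2
    have hdiff : Tendsto
        (fun ε => (∫ x, φ x ∂(μ ε : Measure M)) - ∫ x, φ (f 0 x) ∂(μ ε : Measure M)) U
        (nhds ((∫ x, φ x ∂(ν : Measure M)) - ∫ x, φ (f 0 x) ∂(ν : Measure M))) :=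
      h1.sub h2
    have hdiff0 := hD0.mono_left hUle
    have := tendsto_nhds_unique hdiff hdiff0
    linarith
  -- conclude: map (f 0) ν = ν, then unique ergodicity
  haveI : IsProbabilityMeasure (Measure.map (f 0) (ν : Measure M)) :=
    Measure.isProbabilityMeasure_map hf0.measurable.aemeasurable
  have hmap : Measure.map (f 0) (ν : Measure M) = (ν : Measure M) := by
    apply ext_of_forall_lintegral_eq_of_IsFiniteMeasure
    intro g
    have hφg : Continuous fun x => ((g x : ℝ)) :=
      NNReal.continuous_coe.comp g.continuous
    have hre : ∫ x, ((g x : ℝ)) ∂(Measure.map (f 0) (ν : Measure M))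
        = ∫ x, ((g x : ℝ)) ∂(ν : Measure M) := by
      rw [integral_map hf0.measurable.aemeasurable hφg.aestronglyMeasurable]
      exact (key ⟨fun x => (g x : ℝ), hφg⟩).symm
    refine (ENNReal.toReal_eq_toReal_iff'
      (BoundedContinuousFunction.lintegral_lt_top_of_nnreal _ g).ne
      (BoundedContinuousFunction.lintegral_lt_top_of_nnreal _ g).ne).mp ?_
    rw [BoundedContinuousFunction.toReal_lintegral_coe_eq_integral,
      BoundedContinuousFunction.toReal_lintegral_coe_eq_integral]
    exact hre
  exact huniq _ inferInstance hmap
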